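/- For every integer m ≥ 2, every η ∈ Ω and all x, y ∈ ℤ, it holds S^{(m)}_{x,y}(η) · (η(y) − η(x)) = B_m(η,y) − B_m(η,x) + ( C_m(η,y,x) − C_m(η,y+1,x+1) ) − ( C_m(η,x,y) − C_m(η,x+1,y+1) ), where B_m(η,z) := ∏_{i=0}^{m−1} η(z−i) + ∏_{i=0}^{m−1} η(z+i) and C_m(η,z,w) := Σ_{k=1}^{m−1} ( ∏_{j=0}^{k−1} η(z+j) ) · ( ∏_{i=1}^{m−k} η(w−i) ). -/
import Mathlib


/-- The sites `a_{j,x,y}` (for `j ∈ {1, …, 4(m-1)}`). -/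
def aIdx (m : ℕ) (x y : ℤ) (j : ℕ) : ℤ :=
  if j ≤ m - 1 then x - ((m : ℤ) - (j : ℤ))
  else if j ≤ 2 * (m - 1) then y + (j : ℤ) - ((m : ℤ) - 1)
  else if j ≤ 3 * (m - 1) then y - (3 * (m : ℤ) - 2 - (j : ℤ))
  else x + (j : ℤ) - 3 * ((m : ℤ) - 1)

/-- The symmetrized porous medium rate
`S^{(m)}_{x,y}(η) = c^{(m,dif)}_{x,y}(η) + c^{(m,dif)}_{y,x}(η)`. -/
noncomputable def Srate (m : ℕ) (x y : ℤ) (η : ℤ → ℝ) : ℝ :=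
  ∑ j ∈ Finset.Icc 1 m,
    (∏ i ∈ Finset.range (m - 1), η (aIdx m x y (i + j)) +
      ∏ i ∈ Finset.range (m - 1), η (aIdx m x y (i + j + 2 * (m - 1))))

/-- `B_m(η,z) = ∏_{i=0}^{m-1} η(z-i) + ∏_{i=0}^{m-1} η(z+i)`. -/
noncomputable def Bm (m : ℕ) (η : ℤ → ℝ) (z : ℤ) : ℝ :=
  ∏ i ∈ Finset.range m, η (z - (i : ℤ)) + ∏ i ∈ Finset.range m, η (z + (i : ℤ))

/-- `C_m(η,z,w) = ∑_{k=1}^{m-1} (∏_{j=0}^{k-1} η(z+j)) (∏_{i=1}^{m-k} η(w-i))`. -/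
noncomputable def Cm (m : ℕ) (η : ℤ → ℝ) (z w : ℤ) : ℝ :=
  ∑ k ∈ Finset.Icc 1 (m - 1),
    (∏ j ∈ Finset.range k, η (z + (j : ℤ))) * ∏ i ∈ Finset.Icc 1 (m - k), η (w - (i : ℤ))

/-! ### Auxiliary definitions -/

noncomputable def Uu (η : ℤ → ℝ) (x : ℤ) (n : ℕ) : ℝ := ∏ i ∈ Finset.Icc 1 n, η (x - (i : ℤ))
noncomputable def Vv (η : ℤ → ℝ) (y : ℤ) (n : ℕ) : ℝ := ∏ i ∈ Finset.Icc 1 n, η (y + (i : ℤ))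
noncomputable def Rr (η : ℤ → ℝ) (z : ℤ) (n : ℕ) : ℝ := ∏ i ∈ Finset.range n, η (z + (i : ℤ))
noncomputable def Ll (η : ℤ → ℝ) (z : ℤ) (n : ℕ) : ℝ := ∏ i ∈ Finset.range n, η (z - (i : ℤ))
noncomputable def Tsum (η : ℤ → ℝ) (x y : ℤ) (m : ℕ) : ℝ :=
  ∑ k ∈ Finset.range m, Uu η x (m - 1 - k) * Vv η y k

lemma Icc_prod_range (f : ℕ → ℝ) (n : ℕ) :
    ∏ i ∈ Finset.Icc 1 n, f i = ∏ i ∈ Finset.range n, f (1 + i) := by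
  rw [← Finset.Ico_add_one_right_eq_Icc, Finset.prod_Ico_eq_prod_range]
  simp

lemma Icc_sum_range (f : ℕ → ℝ) (n : ℕ) :
    ∑ i ∈ Finset.Icc 1 n, f i = ∑ i ∈ Finset.range n, f (1 + i) := by
  rw [← Finset.Ico_add_one_right_eq_Icc, Finset.sum_Ico_eq_sum_range]
  simp

lemma Uu_range (η : ℤ → ℝ) (x : ℤ) (n : ℕ) :
    Uu η x n = ∏ i ∈ Finset.range n, η (x - (1 + (i : ℤ))) := by
  rw [Uu, Icc_prod_range]
  exact Finset.prod_congr rfl fun i _ => by push_cast; ring_nf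

lemma Vv_range (η : ℤ → ℝ) (y : ℤ) (n : ℕ) :
    Vv η y n = ∏ i ∈ Finset.range n, η (y + (1 + (i : ℤ))) := by
  rw [Vv, Icc_prod_range]
  exact Finset.prod_congr rfl fun i _ => by push_cast; ring_nf

lemma Rr_succ (η : ℤ → ℝ) (z : ℤ) (n : ℕ) : Rr η z (n + 1) = η z * Vv η z n := by
  rw [Rr, Finset.prod_range_succ', Vv_range, mul_comm]
  simp only [Nat.cast_zero, add_zero]
  congr 1
  exact Finset.prod_congr rfl fun i _ => by push_cast; ring_nf

lemma Ll_succ (η : ℤ → ℝ) (z : ℤ) (n : ℕ) : Ll η z (n + 1) = η z * Uu η z n := by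
  rw [Ll, Finset.prod_range_succ', Uu_range, mul_comm]
  simp only [Nat.cast_zero, sub_zero]
  congr 1
  exact Finset.prod_congr rfl fun i _ => by push_cast; ring_nf

lemma Rr_shift (η : ℤ → ℝ) (y : ℤ) (n : ℕ) : Rr η (y + 1) n = Vv η y n := by
  rw [Rr, Vv_range]
  exact Finset.prod_congr rfl fun i _ => by ring_nf

lemma Uu_shift (η : ℤ → ℝ) (x : ℤ) (n : ℕ) : Uu η (x + 1) n = Ll η x n := by
  rw [Ll, Uu_range]
  exact Finset.prod_congr rfl fun i _ => by ring_nf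

lemma Cm_eq (m : ℕ) (η : ℤ → ℝ) (z w : ℤ) :
    Cm m η z w = ∑ k ∈ Finset.range (m - 1), Rr η z (1 + k) * Uu η w (m - (1 + k)) := by
  rw [Cm, Icc_sum_range]
  rfl

lemma Vv_zero (η : ℤ → ℝ) (y : ℤ) : Vv η y 0 = 1 := by simp [Vv]

/-- shift by `2(m-1)` swaps the roles of `x` and `y` -/
lemma aIdx_shift (m : ℕ) (hm : 2 ≤ m) (x y : ℤ) (k : ℕ) (h1 : 1 ≤ k) (h2 : k ≤ 2 * (m - 1)) :
    aIdx m x y (k + 2 * (m - 1)) = aIdx m y x k := by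
  unfold aIdx
  split_ifs <;> omega

lemma window1 (m : ℕ) (hm : 2 ≤ m) (x y : ℤ) (η : ℤ → ℝ) (j : ℕ) (hj1 : 1 ≤ j) (hjm : j ≤ m) :
    ∏ i ∈ Finset.range (m - 1), η (aIdx m x y (i + j)) = Uu η x (m - j) * Vv η y (j - 1) := by
  have hsplit : m - 1 = (m - j) + (j - 1) := by omega
  rw [hsplit, Finset.prod_range_add]
  congr 1
  · rw [← Finset.prod_range_reflect, Uu_range]
    refine Finset.prod_congr rfl fun i hi => ?_
    simp only [Finset.mem_range] at hi
    have hle : m - j - 1 - i + j ≤ m - 1 := by omega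
    rw [aIdx, if_pos hle]
    congr 1
    omega
  · rw [Vv_range]
    refine Finset.prod_congr rfl fun i hi => ?_
    simp only [Finset.mem_range] at hi
    rw [aIdx, if_neg (by omega), if_pos (by omega)]
    congr 1
    omega

lemma Srate_eq (m : ℕ) (hm : 2 ≤ m) (x y : ℤ) (η : ℤ → ℝ) :
    Srate m x y η = Tsum η x y m + Tsum η y x m := by
  rw [Srate]
  have key : ∀ j ∈ Finset.Icc 1 m,
      (∏ i ∈ Finset.range (m - 1), η (aIdx m x y (i + j)) +
        ∏ i ∈ Finset.range (m - 1), η (aIdx m x y (i + j + 2 * (m - 1)))) =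
      Uu η x (m - j) * Vv η y (j - 1) + Uu η y (m - j) * Vv η x (j - 1) := by
    intro j hj
    simp only [Finset.mem_Icc] at hj
    congr 1
    · exact window1 m hm x y η j hj.1 hj.2
    · have : ∀ i ∈ Finset.range (m - 1),
          η (aIdx m x y (i + j + 2 * (m - 1))) = η (aIdx m y x (i + j)) := by
        intro i hi
        simp only [Finset.mem_range] at hi
        rw [aIdx_shift m hm x y (i + j) (by omega) (by omega)]
      rw [Finset.prod_congr rfl this]
      exact window1 m hm y x η j hj.1 hj.2
  rw [Finset.sum_congr rfl key, Finset.sum_add_distrib]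
  congr 1 <;>
  · rw [Tsum, Icc_sum_range]
    refine Finset.sum_congr rfl fun k _ => ?_
    congr 2 <;> omega

lemma Tmul (m : ℕ) (hm : 2 ≤ m) (x y : ℤ) (η : ℤ → ℝ) :
    Tsum η x y m * (η y - η x) =
      Rr η y m + Cm m η y x - (Ll η x m + Cm m η (y + 1) (x + 1)) := by
  have expand : Tsum η x y m * (η y - η x) =
      (∑ k ∈ Finset.range m, Uu η x (m - 1 - k) * Rr η y (k + 1)) -
      (∑ k ∈ Finset.range m, Ll η x (m - k) * Vv η y k) := by
    rw [Tsum, Finset.sum_mul, ← Finset.sum_sub_distrib]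
    refine Finset.sum_congr rfl fun k hk => ?_
    simp only [Finset.mem_range] at hk
    have h1 : Rr η y (k + 1) = η y * Vv η y k := Rr_succ η y k
    have h2 : Ll η x (m - k) = η x * Uu η x (m - 1 - k) := by
      have : m - k = (m - 1 - k) + 1 := by omega
      rw [this, Ll_succ]
    rw [h1, h2]; ring
  rw [expand]
  have hA : ∑ k ∈ Finset.range m, Uu η x (m - 1 - k) * Rr η y (k + 1) =
      Cm m η y x + Rr η y m := by
    have hm1 : m = (m - 1) + 1 := by omega
    rw [hm1, Finset.sum_range_succ, ← hm1]
    have : Uu η x (m - 1 - (m - 1)) = 1 := by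
      simp [show m - 1 - (m - 1) = 0 from by omega, Uu]
    rw [this, one_mul, Cm_eq]
    congr 1
    refine Finset.sum_congr rfl fun k hk => ?_
    rw [mul_comm, show m - (1 + k) = m - 1 - k from by omega, show 1 + k = k + 1 from by omega]
  have hB : ∑ k ∈ Finset.range m, Ll η x (m - k) * Vv η y k =
      Cm m η (y + 1) (x + 1) + Ll η x m := by
    have hm1 : m = (m - 1) + 1 := by omega
    rw [hm1, Finset.sum_range_succ', ← hm1]
    rw [show m - 0 = m from rfl, Vv_zero, mul_one, Cm_eq]
    congr 1
    refine Finset.sum_congr rfl fun k hk => ?_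
    rw [Rr_shift, Uu_shift, show 1 + k = k + 1 from by omega, mul_comm]
  rw [hA, hB]; ring

theorem stmt6 (m : ℕ) (hm : 2 ≤ m) (η : ℤ → ℝ) (hη : ∀ z : ℤ, η z = 0 ∨ η z = 1)
    (x y : ℤ) :
    Srate m x y η * (η y - η x) =
      Bm m η y - Bm m η x + (Cm m η y x - Cm m η (y + 1) (x + 1)) -
        (Cm m η x y - Cm m η (x + 1) (y + 1)) := by
  have hS := Srate_eq m hm x y η
  have h1 := Tmul m hm x y η
  have h2 := Tmul m hm y x η
  have hBy : Bm m η y = Ll η y m + Rr η y m := rfl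
  have hBx : Bm m η x = Ll η x m + Rr η x m := rfl
  rw [hS, hBy, hBx]
  have : (Tsum η x y m + Tsum η y x m) * (η y - η x) =
      Tsum η x y m * (η y - η x) - Tsum η y x m * (η x - η y) := by ring
  rw [this, h1, h2]
  ring
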